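/- Let K be a differential field of characteristic 0 whose field of constants is algebraically closed in K, and let L be a finite Galois extension of K (with the unique extension of the derivation) such that C_K is relatively algebraically closed in L. Then C_L = C_K and L is generated over K by a finite-dimensional C_K-vector space invariant under Gal(L/K); consequently L is a Picard–Vessiot extension of K. -/

import Mathlib

open Polynomial Finset

section DiffAux
variable {L : Type*} [Field L] (D : L → L)
  (hadd : ∀ a b : L, D (a + b) = D a + D b)
  (hleib : ∀ a b : L, D (a * b) = a * D b + D a * b)

include hadd in
lemma d_zero : D 0 = 0 := by have := hadd 0 0; simp at this; exact this

include hleib in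
lemma d_one : D 1 = 0 := by have := hleib 1 1; simp at this; exact this

include hadd in
lemma d_neg (a : L) : D (-a) = - D a := by
  have := hadd a (-a); rw [add_neg_cancel, d_zero D hadd] at this
  linear_combination -this

include hadd in
lemma d_sum {ι : Type*} (s : Finset ι) (f : ι → L) :
    D (∑ i ∈ s, f i) = ∑ i ∈ s, D (f i) := by
  classical
  induction s using Finset.induction with
  | empty => simpa using d_zero D hadd
  | insert _ _ h ih => rw [Finset.sum_insert h, Finset.sum_insert h, hadd, ih]

include hleib in
lemma d_pow (x : L) (k : ℕ) : D (x ^ k) = k * x ^ (k - 1) * D x := by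
  induction k with
  | zero => simpa using d_one D hleib
  | succ k ih =>
    rw [pow_succ, hleib, ih]
    rcases Nat.eq_zero_or_pos k with hk | hk
    · subst hk; simp [d_one D hleib]
    · have h1 : x ^ (k - 1) * x = x ^ k := by
        rw [← pow_succ]; congr 1; omega
      push_cast
      linear_combination (↑k * D x) * h1

include hadd hleib in
lemma d_eval (q : Polynomial L) (x : L) :
    D (q.eval x) = (q.sum fun k a => D a * x ^ k) + q.derivative.eval x * D x := by
  induction q using Polynomial.induction_on' with
  | add p q hp hq =>
    rw [eval_add, hadd, hp, hq, Polynomial.sum_add_index, derivative_add, eval_add]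
    · ring
    · intro i; simp [d_zero D hadd]
    · intro k a b; rw [hadd]; ring
  | monomial k a =>
    rw [eval_monomial, hleib, Polynomial.sum_monomial_index, derivative_monomial,
      eval_monomial, d_pow D hleib]
    · ring
    · simp [d_zero D hadd]

include hadd hleib in
lemma d_iter_const (q : L) (hq : D q = 0) : ∀ (i : ℕ) (y : L), D^[i] (q * y) = q * D^[i] y := by
  intro i
  induction i with
  | zero => intro y; simp
  | succ i ih =>
    intro y
    rw [Function.iterate_succ_apply, Function.iterate_succ_apply, hleib, hq, zero_mul,
      add_zero, ih]

include hadd in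
lemma d_iter_sum {ι : Type*} (s : Finset ι) (f : ι → L) (i : ℕ) :
    D^[i] (∑ j ∈ s, f j) = ∑ j ∈ s, D^[i] (f j) := by
  induction i generalizing f with
  | zero => simp
  | succ i ih =>
    rw [Function.iterate_succ_apply, d_sum D hadd]
    rw [show (∑ j ∈ s, D (f j)) = ∑ j ∈ s, (fun j => D (f j)) j from rfl, ih]
    exact Finset.sum_congr rfl fun j _ => by rw [Function.iterate_succ_apply]

include hadd hleib in
lemma wronskian_det_ne_zero {n : ℕ} (w : Fin n → L)
    (hw : ∀ c : Fin n → L, (∀ i, D (c i) = 0) → ∑ i, c i * w i = 0 → ∀ i, c i = 0) :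
    (Matrix.of fun i j : Fin n => D^[(i : ℕ)] (w j)).det ≠ 0 := by
  classical
  induction n with
  | zero => simp [Matrix.det_isEmpty]
  | succ n IH =>
    intro hdet
    set w' : Fin n → L := fun j => w j.castSucc with hw'def
    have hw' : ∀ c : Fin n → L, (∀ i, D (c i) = 0) → ∑ i, c i * w' i = 0 → ∀ i, c i = 0 := by
      intro c hc hsum j
      have h2 : ∑ i, (Fin.snoc c 0 : Fin (n+1) → L) i * w i = 0 := by
        rw [Fin.sum_univ_castSucc]
        simp only [Fin.snoc_castSucc, Fin.snoc_last, zero_mul, add_zero]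
        exact hsum
      have h3 : ∀ i, D ((Fin.snoc c 0 : Fin (n+1) → L) i) = 0 := by
        intro i
        refine Fin.lastCases ?_ ?_ i
        · simpa using d_zero D hadd
        · intro i; simpa using hc i
      have := hw _ h3 h2 j.castSucc
      simpa using this
    have hM : (Matrix.of fun i j : Fin n => D^[(i : ℕ)] (w' j)).det ≠ 0 := IH w' hw'
    obtain ⟨d, hd0, hdv⟩ := (Matrix.exists_mulVec_eq_zero_iff).mpr hdet
    have hrow : ∀ i : Fin (n+1), ∑ j, D^[(i : ℕ)] (w j) * d j = 0 := by
      intro i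
      have := congrFun hdv i
      simpa [Matrix.mulVec, dotProduct] using this
    have hdlast : d (Fin.last n) ≠ 0 := by
      intro hlast
      have hd' : ∀ j : Fin n, d j.castSucc = 0 := by
        by_contra hne
        push_neg at hne
        have hne' : (fun j : Fin n => d j.castSucc) ≠ 0 := by
          obtain ⟨j, hj⟩ := hne
          intro h0; exact hj (congrFun h0 j)
        apply hM
        rw [← Matrix.exists_mulVec_eq_zero_iff]
        refine ⟨fun j => d j.castSucc, hne', ?_⟩
        funext i
        have := hrow i.castSucc
        rw [Fin.sum_univ_castSucc, hlast] at this
        simp only [mul_zero, add_zero] at this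
        simpa [Matrix.mulVec, dotProduct, mul_comm] using this
      apply hd0
      funext i
      refine Fin.lastCases hlast (fun j => hd' j) i
    set c : Fin n → L := fun j => -(d j.castSucc) / d (Fin.last n) with hcdef
    have key : ∀ i : ℕ, i ≤ n → D^[i] (w (Fin.last n)) = ∑ j, c j * D^[i] (w' j) := by
      intro i hi
      have h := hrow ⟨i, by omega⟩
      rw [Fin.sum_univ_castSucc] at h
      simp only at h
      have h2 : D^[i] (w (Fin.last n)) * d (Fin.last n)
          = ∑ j, (-(d j.castSucc)) * D^[i] (w' j) := by
        have e1 : (∑ j, (-(d j.castSucc)) * D^[i] (w' j))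
            = -∑ x : Fin n, D^[i] (w x.castSucc) * d x.castSucc := by
          rw [← Finset.sum_neg_distrib]
          exact Finset.sum_congr rfl fun j _ => by rw [hw'def]; ring
        rw [e1]
        linear_combination h
      calc D^[i] (w (Fin.last n))
          = (D^[i] (w (Fin.last n)) * d (Fin.last n)) / d (Fin.last n) := by
            field_simp
        _ = (∑ j, (-(d j.castSucc)) * D^[i] (w' j)) / d (Fin.last n) := by rw [h2]
        _ = ∑ j, c j * D^[i] (w' j) := by
            rw [Finset.sum_div]
            exact Finset.sum_congr rfl (fun j _ => by rw [hcdef]; ring)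
    have hc : ∀ j, D (c j) = 0 := by
      have hrel : ∀ i : Fin n, ∑ j, D^[(i:ℕ)] (w' j) * D (c j) = 0 := by
        intro i
        have h1 := key i (le_of_lt i.isLt)
        have h2 := key (i+1) i.isLt
        have h3 := congrArg D h1
        rw [← Function.iterate_succ_apply' D] at h3
        rw [d_sum D hadd] at h3
        have h4 : ∀ j, D (c j * D^[(i:ℕ)] (w' j))
            = c j * D^[(i:ℕ)+1] (w' j) + D (c j) * D^[(i:ℕ)] (w' j) := by
          intro j; rw [hleib, ← Function.iterate_succ_apply' D]
        rw [Finset.sum_congr rfl (fun j _ => h4 j), Finset.sum_add_distrib] at h3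
        simp only [Nat.succ_eq_add_one] at h3
        have h6 : ∑ j, D (c j) * D^[(i:ℕ)] (w' j) = 0 := by
          linear_combination h2 - h3
        rw [← h6]
        exact Finset.sum_congr rfl fun j _ => mul_comm _ _
      by_contra hne
      push_neg at hne
      obtain ⟨j, hj⟩ := hne
      apply hM
      rw [← Matrix.exists_mulVec_eq_zero_iff]
      refine ⟨fun j => D (c j), fun h0 => hj (congrFun h0 j), ?_⟩
      funext i
      simpa [Matrix.mulVec, dotProduct] using hrel i
    have hfin := key 0 (Nat.zero_le n)
    simp only [Function.iterate_zero_apply] at hfin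
    set e : Fin (n+1) → L := Fin.snoc c (-1) with hedef
    have he : ∀ i, D (e i) = 0 := by
      intro i
      refine Fin.lastCases ?_ ?_ i
      · rw [hedef]; simp only [Fin.snoc_last]
        rw [d_neg D hadd, d_one D hleib, neg_zero]
      · intro j; rw [hedef]; simpa using hc j
    have hsum : ∑ i, e i * w i = 0 := by
      rw [Fin.sum_univ_castSucc, hedef]
      simp only [Fin.snoc_castSucc, Fin.snoc_last]
      rw [hfin]; ring
    have := hw e he hsum (Fin.last n)
    rw [hedef] at this
    simp at this

end DiffAux

section DiffAux2
variable {K L : Type*} [Field K] [Field L] [Algebra K L]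
  (DK : K → K) (D : L → L)
  (haddK : ∀ a b : K, DK (a + b) = DK a + DK b)
  (hleibK : ∀ a b : K, DK (a * b) = a * DK b + DK a * b)
  (hadd : ∀ a b : L, D (a + b) = D a + D b)
  (hleib : ∀ a b : L, D (a * b) = a * D b + D a * b)
  (hcomp : ∀ x : K, D (algebraMap K L x) = algebraMap K L (DK x))

include hadd hleib hcomp in
lemma d_aeval_key (p : Polynomial K) (x : L) :
    Polynomial.aeval x (p.sum fun k a => C (DK a) * X ^ k)
      + Polynomial.aeval x (derivative p) * D x = D (Polynomial.aeval x p) := by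
  have hq : Polynomial.aeval x p = (p.map (algebraMap K L)).eval x := by
    rw [Polynomial.aeval_def, Polynomial.eval_map]
  rw [hq, d_eval D hadd hleib]
  congr 1
  · have hsupp : (p.map (algebraMap K L)).support = p.support :=
      Polynomial.support_map_of_injective p (algebraMap K L).injective
    rw [Polynomial.sum_def, Polynomial.sum_def, map_sum, hsupp]
    refine Finset.sum_congr rfl fun k _ => ?_
    rw [Polynomial.coeff_map, hcomp]
    simp [Polynomial.aeval_def]
  · rw [Polynomial.derivative_map, Polynomial.eval_map, Polynomial.aeval_def]

include haddK hleibK hadd hleib hcomp in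
lemma dk_minpoly [FiniteDimensional K L] (x : L) (hx : D x = 0) :
    ∀ k, DK ((minpoly K x).coeff k) = 0 := by
  have hint : IsIntegral K x := IsIntegral.of_finite K x
  set p := minpoly K x with hpdef
  set pD : Polynomial K := p.sum fun k a => C (DK a) * X ^ k with hpD
  have hcoeff : ∀ m : ℕ, pD.coeff m = DK (p.coeff m) := by
    intro m
    rw [hpD, Polynomial.sum_def, Polynomial.finset_sum_coeff]
    have h1 : ∀ k ∈ p.support, (C (DK (p.coeff k)) * X ^ k).coeff m
        = if k = m then DK (p.coeff k) else 0 := by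
      intro k _
      rw [Polynomial.coeff_C_mul, Polynomial.coeff_X_pow]
      simp [eq_comm]
    rw [Finset.sum_congr rfl h1, Finset.sum_ite_eq' p.support m]
    by_cases hm : m ∈ p.support
    · simp [hm]
    · have h2 : p.coeff m = 0 := Polynomial.notMem_support_iff.mp hm
      simp [hm, h2, d_zero DK haddK]
  have hDp := d_aeval_key DK D hadd hleib hcomp p x
  rw [minpoly.aeval, d_zero D hadd, hx, mul_zero, add_zero] at hDp
  have hpD0 : pD = 0 := by
    by_contra hne
    have hle : p.degree ≤ pD.degree := by
      refine minpoly.degree_le_of_ne_zero K x hne ?_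
      rw [← hpD] at hDp
      exact hDp
    have hlt : pD.degree < p.degree := by
      have hpne : p ≠ 0 := minpoly.ne_zero hint
      rw [Polynomial.degree_eq_natDegree hpne]
      rw [Polynomial.degree_lt_iff_coeff_zero]
      intro m hm
      have hm' : p.natDegree ≤ m := by exact_mod_cast hm
      rw [hcoeff]
      rcases eq_or_lt_of_le hm' with h | h
      · rw [← h, (minpoly.monic hint).coeff_natDegree]
        exact d_one DK hleibK
      · rw [Polynomial.coeff_eq_zero_of_natDegree_lt h, d_zero DK haddK]
    exact absurd (lt_of_le_of_lt hle hlt) (lt_irrefl _)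
  intro k
  rw [← hcoeff k, hpD0, Polynomial.coeff_zero]

include hadd hleib hcomp in
lemma d_comm_galois [FiniteDimensional K L] [IsGalois K L] (σ : L ≃ₐ[K] L) (x : L) :
    D (σ x) = σ (D x) := by
  set p := minpoly K x with hpdef
  have hint : IsIntegral K x := IsIntegral.of_finite K x
  have hsep : p.Separable := Algebra.IsSeparable.isSeparable K x
  have hder : Polynomial.aeval x (derivative p) ≠ 0 := by
    intro h0
    obtain ⟨a, b, hab⟩ := hsep
    have := congrArg (Polynomial.aeval x) hab
    rw [map_add, map_mul, map_mul, minpoly.aeval, h0, mul_zero, mul_zero, add_zero,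
      map_one] at this
    exact zero_ne_one this
  have h1 := d_aeval_key DK D hadd hleib hcomp p x
  rw [minpoly.aeval, d_zero D hadd] at h1
  have haσ : Polynomial.aeval (σ x) p = 0 := by
    rw [hpdef, ← minpoly.algEquiv_eq σ x]
    exact minpoly.aeval K (σ x)
  have h2 := d_aeval_key DK D hadd hleib hcomp p (σ x)
  rw [haσ, d_zero D hadd] at h2
  rw [aeval_algHom_apply σ x, aeval_algHom_apply σ x] at h2
  have h3 := congrArg σ h1
  rw [map_add, map_mul, map_zero] at h3
  have h4 : σ (Polynomial.aeval x (derivative p)) * (D (σ x) - σ (D x)) = 0 := by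
    linear_combination h2 - h3
  have h5 : σ (Polynomial.aeval x (derivative p)) ≠ 0 := by
    intro h0
    exact hder (σ.injective (by rw [h0, map_zero]))
  have := (mul_eq_zero.mp h4).resolve_left h5
  linear_combination this

include hadd hleib hcomp in
lemma d_iter_comm_galois [FiniteDimensional K L] [IsGalois K L] (σ : L ≃ₐ[K] L)
    (i : ℕ) (x : L) : D^[i] (σ x) = σ (D^[i] x) := by
  induction i generalizing x with
  | zero => simp
  | succ i ih =>
    rw [Function.iterate_succ_apply, Function.iterate_succ_apply,
      d_comm_galois DK D hadd hleib hcomp σ x, ih]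

end DiffAux2

set_option maxHeartbeats 1000000 in
set_option synthInstance.maxHeartbeats 400000 in
/-- Let `K` be a differential field of characteristic 0 whose field of
constants `C_K` is algebraically closed in `K`, and let `L` be a finite Galois extension of
`K` (with the unique extension `D_L` of the derivation) such that `C_K` is relatively
algebraically closed in `L`.  Then `C_L = C_K`, `L` is generated over `K` by a
finite-dimensional `C_K`-vector space invariant under `Gal(L/K)`, and consequently `L` is a
Picard–Vessiot extension of `K`.  ("Algebraic over `C_K`" is expressed as being a root of a
nonzero polynomial whose coefficients are constants.) -/
theorem stmt19 {K L : Type*} [Field K] [CharZero K] [Field L] [Algebra K L]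
    [FiniteDimensional K L] [IsGalois K L]
    (DK : K → K)
    (haddK : ∀ a b : K, DK (a + b) = DK a + DK b)
    (hleibK : ∀ a b : K, DK (a * b) = a * DK b + DK a * b)
    (DL : L → L)
    (haddL : ∀ a b : L, DL (a + b) = DL a + DL b)
    (hleibL : ∀ a b : L, DL (a * b) = a * DL b + DL a * b)
    (hcomp : ∀ x : K, DL (algebraMap K L x) = algebraMap K L (DK x))
    -- `C_K` is (relatively) algebraically closed in `K`:
    (hrelK : ∀ x : K,
      (∃ p : Polynomial K, p ≠ 0 ∧ (∀ k, DK (p.coeff k) = 0) ∧ p.eval x = 0) → DK x = 0)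
    -- `C_K` is relatively algebraically closed in `L`:
    (hrelL : ∀ x : L,
      (∃ p : Polynomial L, p ≠ 0 ∧
        (∀ k, ∃ c : K, DK c = 0 ∧ algebraMap K L c = p.coeff k) ∧ p.eval x = 0) →
      ∃ c : K, DK c = 0 ∧ algebraMap K L c = x) :
    -- (1) `C_L = C_K`:
    (∀ x : L, DL x = 0 ↔ ∃ c : K, DK c = 0 ∧ algebraMap K L c = x) ∧
    -- (2) `L = K⟨V⟩` for a finite-dimensional `C_K`-space `V` invariant under `Gal(L/K)`:
    (∃ (m : ℕ) (v : Fin m → L),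
      IntermediateField.adjoin K (Set.range v) = ⊤ ∧
      ∀ (σ : L ≃ₐ[K] L) (i : Fin m), ∃ c : Fin m → K,
        (∀ j, DK (c j) = 0) ∧ σ (v i) = ∑ j, algebraMap K L (c j) * v j) ∧
    -- (3) `L` is a Picard–Vessiot extension of `K`: there is a linear differential
    -- equation over `K` of some order `n` with `n` solutions in `L` linearly independent
    -- over the constants, whose solutions generate `L` over `K`:
    (∃ (n : ℕ) (_ : 0 < n) (a : Fin n → K) (w : Fin n → L),
      (∀ i, DL^[n] (w i) + ∑ j : Fin n, algebraMap K L (a j) * DL^[(j : ℕ)] (w i) = 0) ∧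
      (∀ c : Fin n → K, (∀ i, DK (c i) = 0) →
        ∑ i, algebraMap K L (c i) * w i = 0 → ∀ i, c i = 0) ∧
      IntermediateField.adjoin K
        {y : L | DL^[n] y + ∑ j : Fin n, algebraMap K L (a j) * DL^[(j : ℕ)] y = 0} = ⊤) := by
  classical
  have part1 : ∀ x : L, DL x = 0 ↔ ∃ c : K, DK c = 0 ∧ algebraMap K L c = x := by
    intro x
    constructor
    · intro hx
      have hint : IsIntegral K x := IsIntegral.of_finite K x
      have hco := dk_minpoly DK DL haddK hleibK haddL hleibL hcomp x hx
      refine hrelL x ⟨(minpoly K x).map (algebraMap K L),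
        Polynomial.map_ne_zero (minpoly.ne_zero hint), ?_, ?_⟩
      · intro k
        exact ⟨(minpoly K x).coeff k, hco k, (Polynomial.coeff_map _ _).symm⟩
      · rw [Polynomial.eval_map, ← Polynomial.aeval_def, minpoly.aeval]
    · rintro ⟨c, hc, rfl⟩
      rw [hcomp, hc, map_zero]
  have hcommσ : ∀ (σ : L ≃ₐ[K] L) (x : L), DL (σ x) = σ (DL x) :=
    fun σ x => d_comm_galois DK DL haddL hleibL hcomp σ x
  have hitσ : ∀ (σ : L ≃ₐ[K] L) (i : ℕ) (x : L), DL^[i] (σ x) = σ (DL^[i] x) :=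
    fun σ i x => d_iter_comm_galois DK DL haddL hleibL hcomp σ i x
  let C : Subfield L :=
    { carrier := {x : L | DL x = 0}
      one_mem' := d_one DL hleibL
      mul_mem' := by
        intro a b ha hb
        simp only [Set.mem_setOf_eq] at *
        rw [hleibL, ha, hb, mul_zero, zero_mul, add_zero]
      zero_mem' := d_zero DL haddL
      add_mem' := by
        intro a b ha hb
        simp only [Set.mem_setOf_eq] at *
        rw [haddL, ha, hb, add_zero]
      neg_mem' := by
        intro a ha
        simp only [Set.mem_setOf_eq] at *
        rw [d_neg DL haddL, ha, neg_zero]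
      inv_mem' := by
        intro x hx
        simp only [Set.mem_setOf_eq] at *
        rcases eq_or_ne x 0 with h0 | h0
        · rw [h0, inv_zero]; exact d_zero DL haddL
        · have h1 := hleibL x x⁻¹
          rw [mul_inv_cancel₀ h0, d_one DL hleibL, hx, zero_mul, add_zero] at h1
          exact (mul_eq_zero.mp h1.symm).resolve_left h0 }
  obtain ⟨θ, hθ⟩ := Field.exists_primitive_element K L
  haveI : Fintype (L ≃ₐ[K] L) := AlgEquiv.fintype K L
  set m := Fintype.card (L ≃ₐ[K] L) with hm
  set e : Fin m ≃ (L ≃ₐ[K] L) := (Fintype.equivFin (L ≃ₐ[K] L)).symm with he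
  set v : Fin m → L := fun i => e i θ with hv
  have hθv : θ ∈ Set.range v := ⟨e.symm 1, by rw [hv]; simp⟩
  have hadj : ∀ (F : IntermediateField K L), θ ∈ F → F = ⊤ := by
    intro F hF
    rw [eq_top_iff, ← hθ]
    exact IntermediateField.adjoin_le_iff.mpr (Set.singleton_subset_iff.mpr hF)
  have hv_adjoin : IntermediateField.adjoin K (Set.range v) = ⊤ :=
    hadj _ (IntermediateField.subset_adjoin K _ hθv)
  have hGalv : ∀ (σ : L ≃ₐ[K] L) (i : Fin m), ∃ j : Fin m, σ (v i) = v j := by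
    intro σ i
    exact ⟨e.symm ((e i).trans σ), by rw [hv]; simp⟩
  refine ⟨part1, ⟨m, v, hv_adjoin, ?_⟩, ?_⟩
  · intro σ i
    obtain ⟨j, hj⟩ := hGalv σ i
    refine ⟨fun k => if k = j then 1 else 0, ?_, ?_⟩
    · intro k
      by_cases h : k = j <;> simp [h, d_one DK hleibK, d_zero DK haddK]
    · rw [hj]
      rw [Finset.sum_congr rfl (fun k _ => by
        rw [apply_ite (algebraMap K L), map_one, map_zero, ite_mul, one_mul, zero_mul])]
      rw [Finset.sum_ite_eq' Finset.univ j]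
      simp
  -- part 3
  set S : Set L := Set.range v ∪ {1} with hS
  set V : Submodule C L := Submodule.span C S with hV
  have hSfin : S.Finite := (Set.finite_range v).union (Set.finite_singleton 1)
  haveI : FiniteDimensional C V := FiniteDimensional.span_of_finite C hSfin
  haveI : Module.Free ↥C ↥V := Module.Free.of_divisionRing ↥C ↥V
  set n := Module.finrank C ↥V with hn
  set bV := Module.finBasis C ↥V with hbV
  set w : Fin n → L := fun i => (bV i : L) with hw
  have h1V : (1:L) ∈ V := Submodule.subset_span (Or.inr rfl)
  have hθV : θ ∈ V := Submodule.subset_span (Or.inl hθv)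
  have npos : 0 < n := by
    haveI : Nontrivial V := ⟨⟨1, h1V⟩, 0, by
      intro h
      exact one_ne_zero (congrArg (Subtype.val) h)⟩
    exact Module.finrank_pos
  have hmemV : ∀ x : L, x ∈ V → ∃ c : Fin n → C, x = ∑ k, (c k : L) * w k := by
    intro x hx
    refine ⟨fun k => bV.repr ⟨x, hx⟩ k, ?_⟩
    have h1 := congrArg (Subtype.val) (bV.sum_repr ⟨x, hx⟩)
    rw [Submodule.coe_sum] at h1
    exact h1.symm
  have hwind : ∀ c : Fin n → L, (∀ i, DL (c i) = 0) → ∑ i, c i * w i = 0 → ∀ i, c i = 0 := by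
    intro c hc hsum
    have hli : LinearIndependent C w :=
      bV.linearIndependent.map' V.subtype V.ker_subtype
    have h3 := Fintype.linearIndependent_iff.mp hli (fun i => (⟨c i, hc i⟩ : C))
      (by rw [show (∑ i, (⟨c i, hc i⟩ : C) • w i) = ∑ i, c i * w i from rfl]; exact hsum)
    intro i
    exact congrArg Subtype.val (h3 i)
  have hWdet := wronskian_det_ne_zero DL haddL hleibL w hwind
  set M : Matrix (Fin n) (Fin n) L := Matrix.of (fun i j => DL^[(i:ℕ)] (w j)) with hM
  have hMdet : IsUnit M.det := isUnit_iff_ne_zero.mpr hWdet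
  have hMunit : IsUnit M := (Matrix.isUnit_iff_isUnit_det M).mpr hMdet
  set b0 : Fin n → L := fun j => DL^[n] (w j) with hb0
  set A : Fin n → L := Matrix.vecMul (-b0) M⁻¹ with hA
  have hAM : Matrix.vecMul A M = -b0 := by
    rw [hA, Matrix.vecMul_vecMul, Matrix.nonsing_inv_mul M hMdet, Matrix.vecMul_one]
  have hAMj : ∀ j, ∑ i, A i * M i j = - b0 j := by
    intro j
    have := congrFun hAM j
    simpa [Matrix.vecMul, dotProduct] using this
  have hsol : ∀ j, DL^[n] (w j) + ∑ i, A i * DL^[(i:ℕ)] (w j) = 0 := by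
    intro j
    have h := hAMj j
    rw [show (∑ i, A i * DL^[(i:ℕ)] (w j)) = ∑ i, A i * M i j from rfl, h]
    exact add_neg_cancel _
  have hσC : ∀ (σ : L ≃ₐ[K] L) (x : L), DL x = 0 → DL (σ x) = 0 := by
    intro σ x hx; rw [hcommσ, hx, map_zero]
  have hσV : ∀ (σ : L ≃ₐ[K] L) (x : L), x ∈ V → σ x ∈ V := by
    intro σ x hx
    induction hx using Submodule.span_induction with
    | mem y hy =>
      rcases hy with ⟨i, rfl⟩ | hy
      · obtain ⟨j, hj⟩ := hGalv σ i
        rw [hj]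
        exact Submodule.subset_span (Or.inl ⟨j, rfl⟩)
      · rw [Set.mem_singleton_iff] at hy
        rw [hy, map_one]
        exact h1V
    | zero => rw [map_zero]; exact V.zero_mem
    | add a b _ _ ha hb => rw [map_add]; exact V.add_mem ha hb
    | smul r y _ hy =>
      have h2 : DL (σ (r:L)) = 0 := hσC σ _ r.2
      have h3 : σ (r • y) = (⟨σ (r:L), h2⟩ : C) • σ y := map_mul σ _ _
      rw [h3]
      exact V.smul_mem _ hy
  have hQex : ∀ σ : L ≃ₐ[K] L, ∃ Q : Matrix (Fin n) (Fin n) L,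
      (∀ k j, DL (Q k j) = 0) ∧ (∀ j, σ (w j) = ∑ k, Q k j * w k) := by
    intro σ
    have hmem : ∀ j, σ (w j) ∈ V := fun j => hσV σ (w j) (bV j).2
    choose c hc using fun j => hmemV (σ (w j)) (hmem j)
    exact ⟨Matrix.of (fun k j => ((c j k : L))), fun k j => (c j k).2, hc⟩
  have hMQ : ∀ (σ : L ≃ₐ[K] L) (Q : Matrix (Fin n) (Fin n) L),
      (∀ k j, DL (Q k j) = 0) → (∀ j, σ (w j) = ∑ k, Q k j * w k) →
      (∀ i j, σ (M i j) = (M * Q) i j) := by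
    intro σ Q hQc hQw i j
    have h1 : σ (M i j) = DL^[(i:ℕ)] (σ (w j)) := (hitσ σ i (w j)).symm
    rw [h1, hQw j, d_iter_sum DL haddL,
      Finset.sum_congr rfl (fun k _ => d_iter_const DL haddL hleibL (Q k j) (hQc k j) i (w k)),
      Matrix.mul_apply]
    exact Finset.sum_congr rfl (fun k _ => mul_comm _ _)
  have hfixA : ∀ (σ : L ≃ₐ[K] L) (i : Fin n), σ (A i) = A i := by
    intro σ
    obtain ⟨Q, hQc, hQw⟩ := hQex σ
    have hMQ' : M.map σ = M * Q := by
      ext i j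
      exact hMQ σ Q hQc hQw i j
    have hdetQ : IsUnit Q.det := by
      have h1 : σ M.det = (M * Q).det := by
        rw [← hMQ']
        exact RingHom.map_det (σ : L →+* L) M
      rw [Matrix.det_mul] at h1
      have h2 : σ M.det ≠ 0 := fun h0 => hWdet (σ.injective (by rw [h0, map_zero]))
      refine isUnit_iff_ne_zero.mpr ?_
      intro h0
      exact h2 (by rw [h1, h0, mul_zero])
    have hQunit : IsUnit Q := (Matrix.isUnit_iff_isUnit_det Q).mpr hdetQ
    have hbQ : ∀ j, σ (b0 j) = Matrix.vecMul b0 Q j := by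
      intro j
      have h1 : σ (b0 j) = DL^[n] (σ (w j)) := (hitσ σ n (w j)).symm
      rw [h1, hQw j, d_iter_sum DL haddL,
        Finset.sum_congr rfl (fun k _ => d_iter_const DL haddL hleibL (Q k j) (hQc k j) n (w k))]
      simp only [Matrix.vecMul, dotProduct]
      exact Finset.sum_congr rfl (fun k _ => mul_comm _ _)
    have h1 : Matrix.vecMul (fun i => σ (A i)) (M * Q) = Matrix.vecMul A (M * Q) := by
      funext j
      have l1 : Matrix.vecMul (fun i => σ (A i)) (M * Q) j = σ (∑ i, A i * M i j) := by
        rw [map_sum]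
        simp only [Matrix.vecMul, dotProduct]
        refine Finset.sum_congr rfl fun i _ => ?_
        rw [← hMQ σ Q hQc hQw i j, map_mul]
      rw [l1, hAMj j, map_neg, hbQ j]
      rw [← Matrix.vecMul_vecMul, hAM]
      simp only [Matrix.vecMul, dotProduct, Pi.neg_apply, neg_mul]
      rw [Finset.sum_neg_distrib]
    have h2 := (Matrix.vecMul_injective_iff_isUnit.mpr (hMunit.mul hQunit)) h1
    intro i
    exact congrFun h2 i
  have hbot : IntermediateField.fixedField (⊤ : Subgroup (L ≃ₐ[K] L))
      = (⊥ : IntermediateField K L) :=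
    ((IsGalois.tfae).out 0 1).mp (inferInstance : IsGalois K L)
  have hAK : ∀ i, ∃ k : K, algebraMap K L k = A i := by
    intro i
    have hmem : A i ∈ IntermediateField.fixedField (⊤ : Subgroup (L ≃ₐ[K] L)) := by
      intro g
      exact hfixA g.1 i
    rw [hbot] at hmem
    exact IntermediateField.mem_bot.mp hmem
  choose a ha using hAK
  refine ⟨n, npos, a, w, ?_, ?_, ?_⟩
  · intro i
    rw [Finset.sum_congr rfl (fun j _ => by rw [ha j])]
    exact hsol i
  · intro c hc hsum i
    have h1 := hwind (fun i => algebraMap K L (c i))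
      (fun i => by rw [hcomp, hc i, map_zero]) hsum i
    exact (algebraMap K L).injective (by rw [h1, map_zero])
  · set F := IntermediateField.adjoin K
      {y : L | DL^[n] y + ∑ j : Fin n, algebraMap K L (a j) * DL^[(j:ℕ)] y = 0} with hF
    have hwF : ∀ i, w i ∈ F := by
      intro i
      refine IntermediateField.subset_adjoin K _ ?_
      show DL^[n] (w i) + ∑ j : Fin n, algebraMap K L (a j) * DL^[(j:ℕ)] (w i) = 0
      rw [Finset.sum_congr rfl (fun j _ => by rw [ha j])]
      exact hsol i
    have hθF : θ ∈ F := by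
      obtain ⟨c, hc⟩ := hmemV θ hθV
      rw [hc]
      refine sum_mem fun k _ => ?_
      obtain ⟨k0, hk0, hk0e⟩ := (part1 ((c k : L))).mp (c k).2
      rw [← hk0e]
      exact mul_mem (F.algebraMap_mem k0) (hwF k)
    exact hadj F hθF
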